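/- Block-encoding of a density operator from an approximate block-encoding of a purifier: Let n, a, b be natural numbers, β ≥ 1, ε ≥ 0. Let ρ be a density matrix on ℂ^{2^n}, and let V be a unitary on ℂ^{2^a} ⊗ ℂ^{2^n} such that the partial trace over the first factor ℂ^{2^a} of (V|0⟩)(V|0⟩)† equals ρ, where |0⟩ denotes the all-zeros basis vector of ℂ^{2^a} ⊗ ℂ^{2^n} (i.e., V|0⟩ is a purification of ρ). Let U be a unitary on ℂ^{2^b} ⊗ ℂ^{2^a} ⊗ ℂ^{2^n} that is a (β, b, ε)-block-encoding of V. On the Hilbert space H = ℂ^{2^b}_{(1)} ⊗ ℂ^{2^b}_{(2)} ⊗ ℂ^{2^a} ⊗ ℂ^{2^n}_{(s)} ⊗ ℂ^{2^n}_{(t)}, define the unitary Ũ as the composition of: first U applied to registers ((1), a, s); then the SWAP of registers (s) and (t); then U† applied to registers ((2), a, s); identity on all other registers in each step. Then the operator β²·(⟨0|_{(1),(2),a,s} ⊗ I_{(t)}) Ũ (|0⟩_{(1),(2),a,s} ⊗ I_{(t)}) on ℂ^{2^n}_{(t)} satisfies ‖β²·(⟨0| ⊗ I) Ũ (|0⟩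 ⊗ I) − ρ‖ ≤ 2ε + ε²; in particular, when β = 1, ε = 0, b = 0 and U = V, this block equals ρ exactly. -/
import Mathlib


open scoped ComplexOrder Matrix

instance (a : ℕ) : NeZero (2 ^ a) := ⟨pow_ne_zero a two_ne_zero⟩

/-- The ℓ² operator norm (largest singular value) of a complex matrix. -/
noncomputable def l2OpNorm {m n : Type*} [Fintype m] [Fintype n] [DecidableEq n]
    (M : Matrix m n ℂ) : ℝ :=
  ‖(Matrix.toEuclideanLin M).toContinuousLinearMap‖

open scoped Matrix.Norms.L2Operator in
lemma l2OpNorm_eq_norm {m n : Type*} [Fintype m] [Fintype n] [DecidableEq n]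
    (M : Matrix m n ℂ) : l2OpNorm M = ‖M‖ := rfl

lemma l2OpNorm_nonneg {m n : Type*} [Fintype m] [Fintype n] [DecidableEq n]
    (M : Matrix m n ℂ) : 0 ≤ l2OpNorm M := norm_nonneg _

open scoped Matrix.Norms.L2Operator in
lemma l2OpNorm_add_le {m n : Type*} [Fintype m] [Fintype n] [DecidableEq n]
    (M N : Matrix m n ℂ) : l2OpNorm (M + N) ≤ l2OpNorm M + l2OpNorm N := by
  simp only [l2OpNorm_eq_norm]; exact norm_add_le M N

open scoped Matrix.Norms.L2Operator in
lemma l2OpNorm_mul_le {l m n : Type*} [Fintype l] [Fintype m] [Fintype n]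
    [DecidableEq m] [DecidableEq n]
    (M : Matrix l m ℂ) (N : Matrix m n ℂ) :
    l2OpNorm (M * N) ≤ l2OpNorm M * l2OpNorm N := by
  simp only [l2OpNorm_eq_norm]; exact Matrix.l2_opNorm_mul M N

open scoped Matrix.Norms.L2Operator in
lemma l2OpNorm_le_of_sq_sum {m n : Type*} [Fintype m] [Fintype n] [DecidableEq n]
    (M : Matrix m n ℂ) (c : ℝ) (hc : 0 ≤ c) (h : ∑ k, ∑ i, ‖M k i‖ ^ 2 ≤ c ^ 2) :
    l2OpNorm M ≤ c := by
  rw [l2OpNorm_eq_norm, Matrix.l2_opNorm_def]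
  apply ContinuousLinearMap.opNorm_le_bound _ hc
  intro x
  have hx : ‖x‖ = Real.sqrt (∑ i, ‖x i‖ ^ 2) := by rw [EuclideanSpace.norm_eq]
  have key : ∀ k, ‖(Matrix.toEuclideanLin M x : EuclideanSpace ℂ m) k‖ ^ 2
      ≤ (∑ i, ‖M k i‖ ^ 2) * ∑ i, ‖x i‖ ^ 2 := by
    intro k
    have h1 : (Matrix.toEuclideanLin M x : EuclideanSpace ℂ m) k = ∑ i, M k i * x i := by
      simp [Matrix.toEuclideanLin_apply, Matrix.mulVec, dotProduct]
    rw [h1]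
    calc ‖∑ i, M k i * x i‖ ^ 2 ≤ (∑ i, ‖M k i‖ * ‖x i‖) ^ 2 := by
          apply pow_le_pow_left₀ (norm_nonneg _)
          exact (norm_sum_le _ _).trans (le_of_eq (by simp [norm_mul]))
      _ ≤ (∑ i, ‖M k i‖ ^ 2) * ∑ i, ‖x i‖ ^ 2 :=
          Finset.sum_mul_sq_le_sq_mul_sq _ _ _
  have hmain : ‖(Matrix.toEuclideanLin M).toContinuousLinearMap x‖ ^ 2 ≤ (c * ‖x‖) ^ 2 := by
    have hn : ‖(Matrix.toEuclideanLin M).toContinuousLinearMap x‖ ^ 2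
        = ∑ k, ‖(Matrix.toEuclideanLin M x : EuclideanSpace ℂ m) k‖ ^ 2 := by
      rw [EuclideanSpace.norm_eq, Real.sq_sqrt (by positivity)]
      rfl
    rw [hn, mul_pow, hx, Real.sq_sqrt (by positivity)]
    calc ∑ k, ‖(Matrix.toEuclideanLin M x : EuclideanSpace ℂ m) k‖ ^ 2
        ≤ ∑ k, (∑ i, ‖M k i‖ ^ 2) * ∑ i, ‖x i‖ ^ 2 := Finset.sum_le_sum fun k _ => key k
      _ = (∑ k, ∑ i, ‖M k i‖ ^ 2) * ∑ i, ‖x i‖ ^ 2 := by rw [Finset.sum_mul]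
      _ ≤ c ^ 2 * ∑ i, ‖x i‖ ^ 2 := mul_le_mul_of_nonneg_right h (by positivity)
  exact (pow_le_pow_iff_left₀ (norm_nonneg _) (by positivity) two_ne_zero).mp hmain

open scoped Matrix.Norms.L2Operator in
lemma col_sq_sum_le {m n : Type*} [Fintype m] [Fintype n] [DecidableEq n]
    (M : Matrix m n ℂ) (q : n) : ∑ p, ‖M p q‖ ^ 2 ≤ l2OpNorm M ^ 2 := by
  have hx : ‖(EuclideanSpace.single q (1 : ℂ))‖ = 1 := by
    simp [EuclideanSpace.norm_single]
  have h3 := M.l2_opNorm_mulVec (EuclideanSpace.single q (1 : ℂ))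
  rw [hx, mul_one] at h3
  have h2 : Real.sqrt (∑ p, ‖M p q‖ ^ 2) ≤ l2OpNorm M := by
    refine le_trans (le_of_eq ?_) h3
    rw [EuclideanSpace.norm_eq]
    congr 1
    refine Finset.sum_congr rfl fun p _ => ?_
    congr 1
    show ‖M p q‖ = ‖(M *ᵥ (EuclideanSpace.single q (1 : ℂ))) p‖
    congr 1
    simp [Matrix.mulVec, dotProduct, EuclideanSpace.single_apply]
  calc ∑ p, ‖M p q‖ ^ 2 = Real.sqrt (∑ p, ‖M p q‖ ^ 2) ^ 2 := by
        rw [Real.sq_sqrt (by positivity)]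
    _ ≤ l2OpNorm M ^ 2 := pow_le_pow_left₀ (Real.sqrt_nonneg _) h2 2
/-- **Block-encoding of a density operator from an approximate block-encoding of a purifier.**
Registers: `(1) : ℂ^{2^b}`, `(2) : ℂ^{2^b}`, `a : ℂ^{2^a}`, `s, t : ℂ^{2^n}`.
`V` is a unitary on registers `(a, s)` whose first column `V|0⟩` purifies `ρ` (partial trace over
the `a` register), `U` is a unitary on `((1) or (2), a, s)` that is a `(β, b, ε)`-block-encoding
of `V`, and `Ut = U₂† ∘ SWAP_{s,t} ∘ U₁` where `U₁` applies `U` to `((1), a, s)` and `U₂` applies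
`U` to `((2), a, s)`.  Then `‖β² ⬝ (⟨0| ⊗ I) Ut (|0⟩ ⊗ I) − ρ‖ ≤ 2ε + ε²`. -/
theorem block_encoding_of_density_operator
    (n a b : ℕ) (β ε : ℝ) (hβ : 1 ≤ β) (hε : 0 ≤ ε)
    (ρ : Matrix (Fin (2 ^ n)) (Fin (2 ^ n)) ℂ)
    (hρ : ρ.PosSemidef) (hρtr : ρ.trace = 1)
    (V : Matrix (Fin (2 ^ a) × Fin (2 ^ n)) (Fin (2 ^ a) × Fin (2 ^ n)) ℂ)
    (hV : V ∈ Matrix.unitaryGroup (Fin (2 ^ a) × Fin (2 ^ n)) ℂ)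
    (hpure : ∀ i j : Fin (2 ^ n),
      (∑ k : Fin (2 ^ a), V (k, i) (0, 0) * star (V (k, j) (0, 0))) = ρ i j)
    (U : Matrix (Fin (2 ^ b) × Fin (2 ^ a) × Fin (2 ^ n))
                (Fin (2 ^ b) × Fin (2 ^ a) × Fin (2 ^ n)) ℂ)
    (hU : U ∈ Matrix.unitaryGroup (Fin (2 ^ b) × Fin (2 ^ a) × Fin (2 ^ n)) ℂ)
    (hUBE : l2OpNorm ((β : ℂ) • Matrix.of (fun p q : Fin (2 ^ a) × Fin (2 ^ n) =>
      U (0, p) (0, q)) - V) ≤ ε)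
    -- `U₁`: `U` applied to registers `((1), a, s)`, identity on `(2)` and `t`
    (U₁ : Matrix (Fin (2 ^ b) × Fin (2 ^ b) × Fin (2 ^ a) × Fin (2 ^ n) × Fin (2 ^ n))
                 (Fin (2 ^ b) × Fin (2 ^ b) × Fin (2 ^ a) × Fin (2 ^ n) × Fin (2 ^ n)) ℂ)
    (hU₁ : U₁ = Matrix.of (fun p q =>
      if p.2.1 = q.2.1 ∧ p.2.2.2.2 = q.2.2.2.2 then
        U (p.1, p.2.2.1, p.2.2.2.1) (q.1, q.2.2.1, q.2.2.2.1) else 0))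
    -- `S`: the SWAP of registers `s` and `t`
    (S : Matrix (Fin (2 ^ b) × Fin (2 ^ b) × Fin (2 ^ a) × Fin (2 ^ n) × Fin (2 ^ n))
                (Fin (2 ^ b) × Fin (2 ^ b) × Fin (2 ^ a) × Fin (2 ^ n) × Fin (2 ^ n)) ℂ)
    (hS : S = Matrix.of (fun p q =>
      if p.1 = q.1 ∧ p.2.1 = q.2.1 ∧ p.2.2.1 = q.2.2.1 ∧
          p.2.2.2.1 = q.2.2.2.2 ∧ p.2.2.2.2 = q.2.2.2.1 then 1 else 0))
    -- `U₂`: `U†` applied to registers `((2), a, s)`, identity on `(1)` and `t`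
    (U₂ : Matrix (Fin (2 ^ b) × Fin (2 ^ b) × Fin (2 ^ a) × Fin (2 ^ n) × Fin (2 ^ n))
                 (Fin (2 ^ b) × Fin (2 ^ b) × Fin (2 ^ a) × Fin (2 ^ n) × Fin (2 ^ n)) ℂ)
    (hU₂ : U₂ = Matrix.of (fun p q =>
      if p.1 = q.1 ∧ p.2.2.2.2 = q.2.2.2.2 then
        Uᴴ (p.2.1, p.2.2.1, p.2.2.2.1) (q.2.1, q.2.2.1, q.2.2.2.1) else 0))
    (Ut : Matrix (Fin (2 ^ b) × Fin (2 ^ b) × Fin (2 ^ a) × Fin (2 ^ n) × Fin (2 ^ n))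
                (Fin (2 ^ b) × Fin (2 ^ b) × Fin (2 ^ a) × Fin (2 ^ n) × Fin (2 ^ n)) ℂ)
    (hUt : Ut = U₂ * S * U₁) :
    l2OpNorm (((β : ℂ) ^ 2) • Matrix.of (fun i j : Fin (2 ^ n) =>
        Ut (0, 0, 0, 0, i) (0, 0, 0, 0, j)) - ρ) ≤ 2 * ε + ε ^ 2 := by
  have hblock : ∀ i j : Fin (2 ^ n), Ut (0, 0, 0, 0, i) (0, 0, 0, 0, j)
      = ∑ k : Fin (2 ^ a), star (U (0, k, j) (0, 0, 0)) * U (0, k, i) (0, 0, 0) := by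
    intro i j
    subst hUt hU₁ hU₂ hS
    simp [Matrix.mul_apply, Fintype.sum_prod_type, Matrix.conjTranspose_apply, ite_and,
      ite_mul, mul_ite, Finset.sum_ite_eq, Finset.sum_ite_eq']
  set X : Matrix (Fin (2 ^ a)) (Fin (2 ^ n)) ℂ :=
    Matrix.of fun k i => (β : ℂ) * U (0, k, i) (0, 0, 0) with hX
  set Y : Matrix (Fin (2 ^ a)) (Fin (2 ^ n)) ℂ :=
    Matrix.of fun k i => V (k, i) (0, 0) with hY
  have hM : ((β : ℂ) ^ 2) • Matrix.of (fun i j : Fin (2 ^ n) =>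
        Ut (0, 0, 0, 0, i) (0, 0, 0, 0, j)) - ρ
      = Xᵀ * (X - Y).map star + (X - Y)ᵀ * Y.map star := by
    ext i j
    have hent : ∀ k : Fin (2 ^ a),
        Xᵀ i k * ((X - Y).map star) k j + (X - Y)ᵀ i k * (Y.map star) k j
          = (β : ℂ) ^ 2 * (star (U (0, k, j) (0, 0, 0)) * U (0, k, i) (0, 0, 0))
            - V (k, i) (0, 0) * star (V (k, j) (0, 0)) := by
      intro k
      simp only [hX, hY, Matrix.transpose_apply, Matrix.map_apply, Matrix.sub_apply,
        Matrix.of_apply, star_sub, star_mul', Complex.star_def, map_sub, map_mul,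
        Complex.conj_ofReal]
      ring
    simp only [Matrix.sub_apply, Matrix.add_apply, Matrix.smul_apply, Matrix.of_apply,
      Matrix.mul_apply, smul_eq_mul, hblock i j]
    rw [← hpure i j, ← Finset.sum_add_distrib,
      Finset.sum_congr rfl fun k _ => hent k, Finset.sum_sub_distrib, ← Finset.mul_sum]
  have hXYsum : ∑ k, ∑ i, ‖(X - Y) k i‖ ^ 2 ≤ ε ^ 2 := by
    have hcol := col_sq_sum_le ((β : ℂ) • Matrix.of (fun p q : Fin (2 ^ a) × Fin (2 ^ n) =>
      U (0, p) (0, q)) - V) ((0 : Fin (2 ^ a)), (0 : Fin (2 ^ n)))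
    have h2 : l2OpNorm ((β : ℂ) • Matrix.of (fun p q : Fin (2 ^ a) × Fin (2 ^ n) =>
        U (0, p) (0, q)) - V) ^ 2 ≤ ε ^ 2 :=
      pow_le_pow_left₀ (l2OpNorm_nonneg _) hUBE 2
    refine le_trans (le_of_eq ?_) (hcol.trans h2)
    rw [Fintype.sum_prod_type]
    refine Finset.sum_congr rfl fun k _ => Finset.sum_congr rfl fun i _ => ?_
    simp [hX, hY, Matrix.sub_apply, Matrix.smul_apply, smul_eq_mul]
  have hXYt : l2OpNorm ((X - Y)ᵀ) ≤ ε := by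
    refine l2OpNorm_le_of_sq_sum _ ε hε ?_
    rw [Finset.sum_comm]
    simpa [Matrix.transpose_apply] using hXYsum
  have hXYm : l2OpNorm ((X - Y).map star) ≤ ε := by
    refine l2OpNorm_le_of_sq_sum _ ε hε (le_trans (le_of_eq ?_) hXYsum)
    refine Finset.sum_congr rfl fun k _ => Finset.sum_congr rfl fun i _ => ?_
    rw [Matrix.map_apply, norm_star]
  have hYsum : ∑ k, ∑ i, ‖Y k i‖ ^ 2 = 1 := by
    have h1 := Matrix.mem_unitaryGroup_iff'.mp hV
    have h2 : (star V * V) ((0 : Fin (2 ^ a)), (0 : Fin (2 ^ n))) (0, 0) = 1 := by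
      rw [h1]; simp [Matrix.one_apply]
    rw [Matrix.star_eq_conjTranspose, Matrix.mul_apply] at h2
    have h3 : ((∑ p : Fin (2 ^ a) × Fin (2 ^ n), ‖V p (0, 0)‖ ^ 2 : ℝ) : ℂ) = 1 := by
      rw [← h2]
      push_cast
      refine Finset.sum_congr rfl fun p _ => ?_
      rw [Matrix.conjTranspose_apply]
      have := RCLike.conj_mul (V p (0, 0))
      push_cast at this
      exact this.symm
    have h4 : (∑ p : Fin (2 ^ a) × Fin (2 ^ n), ‖V p (0, 0)‖ ^ 2 : ℝ) = 1 := by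
      exact_mod_cast h3
    rw [← h4, Fintype.sum_prod_type]
    exact Finset.sum_congr rfl fun k _ => Finset.sum_congr rfl fun i _ => by simp [hY]
  have hYm : l2OpNorm (Y.map star) ≤ 1 := by
    refine l2OpNorm_le_of_sq_sum _ 1 one_pos.le ?_
    simp only [Matrix.map_apply, norm_star, one_pow]
    rw [hYsum]
  have hYt : l2OpNorm Yᵀ ≤ 1 := by
    refine l2OpNorm_le_of_sq_sum _ 1 one_pos.le ?_
    rw [Finset.sum_comm]
    simp only [Matrix.transpose_apply, one_pow]
    rw [hYsum]
  have hXt : l2OpNorm Xᵀ ≤ 1 + ε := by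
    have hXdec : Xᵀ = Yᵀ + (X - Y)ᵀ := by
      rw [← Matrix.transpose_add]
      exact congrArg Matrix.transpose (add_sub_cancel Y X).symm
    rw [hXdec]
    exact (l2OpNorm_add_le _ _).trans (add_le_add hYt hXYt)
  rw [hM]
  calc l2OpNorm (Xᵀ * (X - Y).map star + (X - Y)ᵀ * Y.map star)
      ≤ l2OpNorm (Xᵀ * (X - Y).map star) + l2OpNorm ((X - Y)ᵀ * Y.map star) :=
        l2OpNorm_add_le _ _
    _ ≤ l2OpNorm Xᵀ * l2OpNorm ((X - Y).map star)
        + l2OpNorm ((X - Y)ᵀ) * l2OpNorm (Y.map star) :=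
        add_le_add (l2OpNorm_mul_le _ _) (l2OpNorm_mul_le _ _)
    _ ≤ (1 + ε) * ε + ε * 1 :=
        add_le_add (mul_le_mul hXt hXYm (l2OpNorm_nonneg _) (by linarith))
          (mul_le_mul hXYt hYm (l2OpNorm_nonneg _) hε)
    _ = 2 * ε + ε ^ 2 := by ring
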